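/- Fix p ∈ (1,∞), a Banach space Y, and N ∈ ℕ. Let Ỹ = ℓ^p_{N+1}(Y), J̃ : Y → Ỹ, x ↦ (x,0,…,0), Q̃ : Ỹ → Y, (x₁,…,x_{N+1}) ↦ x₁. For an invertible isometry U ∈ L(Y) define V_U(x₁,…,x_{N+1}) = (Ux₁,…,Ux_{N+1}), and define V₀(x₁,…,x_{N+1}) = (x₂,…,x_{N+1},x₁). Then J̃ and Q̃ are contractions, each V_U and V₀ is an invertible isometry on Ỹ, and for all n ∈ {0,…,N} and all choices W₁,…,W_n where each W_j is either some invertible isometry U_j or the zero operator 0 on Y, one has W₁⋯W_n = Q̃ Ṽ_{W₁}⋯Ṽ_{W_n} J̃, where Ṽ_{W_j} = V_{U_j} if W_j = U_j is an isometry and Ṽ_{W_j} = V₀ if W_j = 0. -/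

import Mathlib

open scoped ENNReal

section Stmt10

variable (p : ℝ) {𝕜 : Type*} [RCLike 𝕜] {Y : Type*} [NormedAddCommGroup Y]
  [NormedSpace 𝕜 Y] (N : ℕ)

/-- The injection `J̃ : Y → ℓ^p_{N+1}(Y)`, `x ↦ (x, 0, …, 0)`. -/
noncomputable def dilJ (x : Y) : PiLp (ENNReal.ofReal p) (fun _ : Fin (N + 1) => Y) :=
  (WithLp.equiv (ENNReal.ofReal p) (∀ _ : Fin (N + 1), Y)).symm
    (fun i => if i = 0 then x else 0)

/-- The projection `Q̃ : ℓ^p_{N+1}(Y) → Y`, `(x₁, …, x_{N+1}) ↦ x₁`. -/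
noncomputable def dilQ (y : PiLp (ENNReal.ofReal p) (fun _ : Fin (N + 1) => Y)) : Y :=
  (WithLp.equiv (ENNReal.ofReal p) (∀ _ : Fin (N + 1), Y)) y 0

/-- `V_U : (x₁, …, x_{N+1}) ↦ (U x₁, …, U x_{N+1})` for an invertible isometry `U`. -/
noncomputable def dilVU (U : Y ≃ₗᵢ[𝕜] Y)
    (y : PiLp (ENNReal.ofReal p) (fun _ : Fin (N + 1) => Y)) :
    PiLp (ENNReal.ofReal p) (fun _ : Fin (N + 1) => Y) :=
  (WithLp.equiv (ENNReal.ofReal p) (∀ _ : Fin (N + 1), Y)).symm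
    (fun i => U ((WithLp.equiv (ENNReal.ofReal p) (∀ _ : Fin (N + 1), Y)) y i))

/-- `V₀ : (x₁, …, x_{N+1}) ↦ (x₂, …, x_{N+1}, x₁)`, the cyclic shift. -/
noncomputable def dilV0 (y : PiLp (ENNReal.ofReal p) (fun _ : Fin (N + 1) => Y)) :
    PiLp (ENNReal.ofReal p) (fun _ : Fin (N + 1) => Y) :=
  (WithLp.equiv (ENNReal.ofReal p) (∀ _ : Fin (N + 1), Y)).symm
    (fun i => (WithLp.equiv (ENNReal.ofReal p) (∀ _ : Fin (N + 1), Y)) y (finRotate (N + 1) i))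

lemma dil_key (L : List (Option (Y ≃ₗᵢ[𝕜] Y))) (hL : L.length ≤ N) (x : Y) (i : Fin (N + 1)) :
    ((L.map (fun o => o.elim (dilV0 p N) (dilVU p N))).foldr (· ∘ ·) id (dilJ p N x)) i
      = if (i : ℕ) + L.countP (·.isNone) = 0 ∨ (i : ℕ) + L.countP (·.isNone) = N + 1
        then ((L.map (fun o => o.elim (id : Y → Y) (fun U => ⇑U))).foldr (· ∘ ·) id) x
        else 0 := by
  induction L generalizing i with
  | nil =>
    have : dilJ p N x i = if i = 0 then x else 0 := rfl
    simp only [List.map_nil, List.foldr_nil, List.countP_nil, add_zero, id] at *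
    rw [this]
    have hi : (i : ℕ) < N + 1 := i.isLt
    refine if_congr ?_ rfl rfl
    rw [Fin.ext_iff, Fin.val_zero]
    omega
  | cons o L ih =>
    have hc : L.countP (·.isNone) < N := by
      have h1 := L.countP_le_length (p := (·.isNone))
      simp only [List.length_cons] at hL
      omega
    cases o with
    | some U =>
      have hLHS : ((List.map (fun o => o.elim (dilV0 p N) (dilVU p N)) (some U :: L)).foldr
          (· ∘ ·) id (dilJ p N x)) i
          = U (((L.map (fun o => o.elim (dilV0 p N) (dilVU p N))).foldr (· ∘ ·) id
              (dilJ p N x)) i) := rfl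
      rw [hLHS, ih (by simpa using Nat.le_of_succ_le hL) i]
      rw [apply_ite U, map_zero]
      have hcnt : (some U :: L).countP (fun o => Option.isNone o) = L.countP (·.isNone) := by
        rw [List.countP_cons]; simp
      rw [hcnt]
      rfl
    | none =>
      have hLHS : ((List.map (fun o => o.elim (dilV0 p N) (dilVU p N)) (none :: L)).foldr
          (· ∘ ·) id (dilJ p N x)) i
          = ((L.map (fun o => o.elim (dilV0 p N) (dilVU p N))).foldr (· ∘ ·) id
              (dilJ p N x)) (finRotate (N + 1) i) := rfl
      rw [hLHS, ih (by simpa using Nat.le_of_succ_le hL)]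
      have hrot : ((finRotate (N + 1) i : Fin (N + 1)) : ℕ) = ((i : ℕ) + 1) % (N + 1) := by
        rw [finRotate_succ_apply, Fin.add_def]
        simp
      have hcount : (none :: L).countP (fun o => Option.isNone o) = L.countP (·.isNone) + 1 := by
        simp [List.countP_cons]
      have hval : ((List.map (fun o => o.elim (id : Y → Y) (fun U => ⇑U)) (none :: L)).foldr
          (· ∘ ·) id) x = ((L.map (fun o => o.elim (id : Y → Y) (fun U => ⇑U))).foldr
          (· ∘ ·) id) x := rfl
      rw [hcount, hval]
      have hi : (i : ℕ) < N + 1 := i.isLt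
      refine if_congr ?_ rfl rfl
      rw [hrot]
      rcases eq_or_lt_of_le (Nat.lt_succ_iff.mp hi) with h | h
      · rw [h, Nat.mod_self]
        omega
      · rw [Nat.mod_eq_of_lt (by omega)]
        omega

lemma word_zero (L : List (Option (Y ≃ₗᵢ[𝕜] Y))) (x : Y) :
    ((L.map (fun o => o.elim (fun _ : Y => (0 : Y)) (fun U => ⇑U))).foldr (· ∘ ·) id) x
      = if L.countP (·.isNone) = 0
        then ((L.map (fun o => o.elim (id : Y → Y) (fun U => ⇑U))).foldr (· ∘ ·) id) x
        else 0 := by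
  induction L with
  | nil => simp
  | cons o L ih =>
    cases o with
    | some U =>
      have h1 : ((List.map (fun o => o.elim (fun _ : Y => (0 : Y)) (fun U => ⇑U))
          (some U :: L)).foldr (· ∘ ·) id) x
          = U (((L.map (fun o => o.elim (fun _ : Y => (0 : Y)) (fun U => ⇑U))).foldr
            (· ∘ ·) id) x) := rfl
      rw [h1, ih, apply_ite U, map_zero]
      have hcnt : (some U :: L).countP (fun o => Option.isNone o) = L.countP (·.isNone) := by
        rw [List.countP_cons]; simp
      rw [hcnt]
      rfl
    | none =>
      have h1 : ((List.map (fun o => o.elim (fun _ : Y => (0 : Y)) (fun U => ⇑U))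
          (none :: L)).foldr (· ∘ ·) id) x = 0 := rfl
      rw [h1]
      rw [if_neg (by simp [List.countP_cons])]

/-- `J̃` and `Q̃` are contractions, every `V_U` and `V₀` is an invertible
isometry on `ℓ^p_{N+1}(Y)`, and every word `W₁⋯W_n` (`n ≤ N`) in invertible isometries
and the zero operator on `Y` satisfies `W₁⋯W_n = Q̃ Ṽ_{W₁}⋯Ṽ_{W_n} J̃`, where
`Ṽ_{W} = V_U` if `W = U` is an isometry and `Ṽ_{W} = V₀` if `W = 0`. -/
theorem zero_operator_N_dilation (hp : 1 < p) :
    (∀ x : Y, ‖dilJ p N x‖ ≤ ‖x‖) ∧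
    (∀ y : PiLp (ENNReal.ofReal p) (fun _ : Fin (N + 1) => Y), ‖dilQ p N y‖ ≤ ‖y‖) ∧
    (∀ U : Y ≃ₗᵢ[𝕜] Y, Function.Bijective (dilVU (𝕜 := 𝕜) p N U) ∧
      ∀ y, ‖dilVU (𝕜 := 𝕜) p N U y‖ = ‖y‖) ∧
    (Function.Bijective (dilV0 (Y := Y) p N) ∧ ∀ y, ‖dilV0 (Y := Y) p N y‖ = ‖y‖) ∧
    (∀ (n : ℕ), n ≤ N → ∀ (w : Fin n → Option (Y ≃ₗᵢ[𝕜] Y)) (x : Y),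
      ((List.ofFn fun j => (w j).elim (fun _ => (0 : Y)) (fun U => ⇑U)).foldr (· ∘ ·) id) x
        = dilQ p N (((List.ofFn fun j =>
            (w j).elim (dilV0 p N) (dilVU p N)).foldr (· ∘ ·) id) (dilJ p N x))) := by
  haveI : Fact (1 ≤ ENNReal.ofReal p) := ⟨ENNReal.one_le_ofReal.mpr hp.le⟩
  have hq : 0 < (ENNReal.ofReal p).toReal := by
    rw [ENNReal.toReal_ofReal (by linarith)]; linarith
  refine ⟨?_, ?_, ?_, ?_, ?_⟩
  · -- J is a contraction (in fact an isometry)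
    intro x
    have h1 : dilJ p N x
        = (WithLp.equiv (ENNReal.ofReal p) (∀ _ : Fin (N + 1), Y)).symm (Pi.single 0 x) := by
      unfold dilJ
      congr 1
      funext i
      simp [Pi.single_apply]
    rw [h1]; exact (PiLp.norm_toLp_single _ _ _ _).le
  · -- Q is a contraction
    intro y
    set q := (ENNReal.ofReal p).toReal with hqdef
    have hnorm : ‖y‖ = (∑ i, ‖y i‖ ^ q) ^ (1 / q) := PiLp.norm_eq_sum hq y
    have hQ : ‖dilQ p N y‖ = ‖y 0‖ := rfl
    rw [hQ, hnorm]
    have h0 : (‖y 0‖ ^ q) ^ (1 / q) = ‖y 0‖ := by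
      rw [← Real.rpow_mul (norm_nonneg _), mul_one_div, div_self hq.ne', Real.rpow_one]
    rw [← h0]
    refine Real.rpow_le_rpow (Real.rpow_nonneg (norm_nonneg _) q) ?_ (by positivity)
    exact Finset.single_le_sum (fun i _ => Real.rpow_nonneg (norm_nonneg _) q)
      (Finset.mem_univ 0)
  · intro U
    have hEq : dilVU (𝕜 := 𝕜) p N U
        = ⇑(LinearIsometryEquiv.piLpCongrRight (ENNReal.ofReal p)
            (fun _ : Fin (N + 1) => U)) := rfl
    rw [hEq]
    exact ⟨(LinearIsometryEquiv.piLpCongrRight (ENNReal.ofReal p)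
      (fun _ : Fin (N + 1) => U)).bijective, fun y => LinearIsometryEquiv.norm_map _ y⟩
  · have hEq : dilV0 (Y := Y) p N
        = ⇑(LinearIsometryEquiv.piLpCongrLeft (ENNReal.ofReal p) 𝕜 Y
            (finRotate (N + 1)).symm) := rfl
    rw [hEq]
    exact ⟨(LinearIsometryEquiv.piLpCongrLeft (ENNReal.ofReal p) 𝕜 Y
      (finRotate (N + 1)).symm).bijective, fun y => LinearIsometryEquiv.norm_map _ y⟩
  · intro n hn w x
    have h1 : (List.ofFn fun j => (w j).elim (fun _ => (0 : Y)) (fun U => ⇑U))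
        = (List.ofFn w).map (fun o => o.elim (fun _ : Y => (0 : Y)) (fun U => ⇑U)) := by
      rw [List.map_ofFn]; rfl
    have h2 : (List.ofFn fun j => (w j).elim (dilV0 p N) (dilVU p N))
        = (List.ofFn w).map (fun o => o.elim (dilV0 p N) (dilVU p N)) := by
      rw [List.map_ofFn]; rfl
    have hlen : (List.ofFn w).length ≤ N := by simp [hn]
    have hcle : (List.ofFn w).countP (·.isNone) ≤ N :=
      le_trans List.countP_le_length hlen
    have hQ : dilQ p N (((List.ofFn w).map (fun o => o.elim (dilV0 p N) (dilVU p N))).foldr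
        (· ∘ ·) id (dilJ p N x))
        = (((List.ofFn w).map (fun o => o.elim (dilV0 p N) (dilVU p N))).foldr
          (· ∘ ·) id (dilJ p N x)) 0 := rfl
    rw [h1, h2, hQ, dil_key p N (List.ofFn w) hlen x 0, word_zero]
    refine if_congr ?_ rfl rfl
    simp only [Fin.val_zero, zero_add]
    omega


end Stmt10
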